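/- Let G be a non-empty graph and λ > 0 a real number such that the average degree d(G) ≥ 2λ, while every non-empty proper subgraph H of G has average degree d(H) < 2λ. Then for every non-empty proper subset S of V(G), the number of edges of G incident with at least one vertex of S is strictly greater than λ|S|. -/

import Mathlib

variable {V : Type*}

/-- `S` separates `u` from `v` in `G`: neither lies in `S` and every walk meets `S`. -/
def SepBy (G : SimpleGraph V) (S : Set V) (u v : V) : Prop :=
  u ∉ S ∧ v ∉ S ∧ ∀ p : G.Walk u v, ∃ w ∈ p.support, w ∈ S

/-- `X` is (≤k)-inseparable: no set of at most `k` vertices separates two of its vertices. -/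
def Insep (G : SimpleGraph V) (k : ℕ) (X : Set V) : Prop :=
  ∀ S : Finset V, S.card ≤ k → ∀ u ∈ X, ∀ v ∈ X, ¬ SepBy G (S : Set V) u v

/-- A `k`-block: a maximal (≤(k-1))-inseparable set of at least `k` vertices. -/
def IsBlockN (G : SimpleGraph V) (k : ℕ) (B : Set V) : Prop :=
  k ≤ B.ncard ∧ Insep G (k - 1) B ∧
    ∀ B' : Set V, B ⊆ B' → Insep G (k - 1) B' → B' = B

/-- `(A,B)` is a separation of `G`. -/
def IsSepn (G : SimpleGraph V) (A B : Set V) : Prop :=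
  A ∪ B = Set.univ ∧ ∀ a ∈ A \ B, ∀ b ∈ B \ A, ¬ G.Adj a b

/-- A separation is proper if neither side contains the other. -/
def ProperSep (A B : Set V) : Prop := ¬ A ⊆ B ∧ ¬ B ⊆ A

/-- `G` is `k`-connected. -/
def KConn (G : SimpleGraph V) [Fintype V] (k : ℕ) : Prop :=
  k < Fintype.card V ∧ ∀ S : Finset V, S.card < k → ∀ u v : V, ¬ SepBy G (S : Set V) u v

theorem stmt9 [Fintype V] [Nonempty V] (G : SimpleGraph V) (lam : ℝ) (hlam : 0 < lam)
    (hG : 2 * lam ≤ 2 * (G.edgeSet.ncard : ℝ) / (Fintype.card V : ℝ))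
    (hH : ∀ H : G.Subgraph, H.verts.Nonempty → H ≠ ⊤ →
      2 * (H.edgeSet.ncard : ℝ) / (H.verts.ncard : ℝ) < 2 * lam) :
    ∀ S : Set V, S.Nonempty → S ≠ Set.univ →
      lam * (S.ncard : ℝ) < (({e ∈ G.edgeSet | ∃ v ∈ S, v ∈ e}).ncard : ℝ) := by
  classical
  intro S hS hSne
  have hScompl : Sᶜ.Nonempty := Set.nonempty_compl.2 hSne
  set H : G.Subgraph := {
    verts := Sᶜ
    Adj := fun a b => G.Adj a b ∧ a ∉ S ∧ b ∉ S
    adj_sub := fun h => h.1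
    edge_vert := fun h => h.2.1
    symm := ⟨fun a b h => ⟨h.1.symm, h.2.2, h.2.1⟩⟩ } with hHdef
  have hHne : H ≠ ⊤ := by
    intro h
    obtain ⟨x, hx⟩ := hS
    have : x ∈ H.verts := by rw [h]; trivial
    exact this hx
  have hHnonempty : H.verts.Nonempty := hScompl
  set B : Set (Sym2 V) := {e ∈ G.edgeSet | ∃ v ∈ S, v ∈ e} with hBdef
  have hBsub : B ⊆ G.edgeSet := fun e he => he.1
  have hEdec : H.edgeSet = G.edgeSet \ B := by
    ext e
    induction e using Sym2.ind with
    | _ a b =>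
      simp only [SimpleGraph.Subgraph.mem_edgeSet, Set.mem_diff, hBdef,
        Set.mem_setOf_eq, SimpleGraph.mem_edgeSet, Sym2.mem_iff]
      constructor
      · rintro ⟨hadj, ha, hb⟩
        refine ⟨hadj, ?_⟩
        rintro ⟨hadj', v, hv, rfl | rfl⟩ <;> [exact ha hv; exact hb hv]
      · rintro ⟨hadj, hnot⟩
        refine ⟨hadj, fun ha => hnot ⟨hadj, a, ha, Or.inl rfl⟩,
          fun hb => hnot ⟨hadj, b, hb, Or.inr rfl⟩⟩
  have hGfin : G.edgeSet.Finite := G.edgeSet.toFinite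
  have hcard : H.edgeSet.ncard + B.ncard = G.edgeSet.ncard := by
    rw [hEdec]
    exact Set.ncard_diff_add_ncard_of_subset hBsub hGfin
  have hn : 0 < (Fintype.card V : ℝ) := by positivity
  have hnc : 0 < (Sᶜ.ncard : ℝ) := by
    have := hScompl.ncard_pos (Sᶜ.toFinite)
    exact_mod_cast this
  have h1 : lam * (Fintype.card V : ℝ) ≤ (G.edgeSet.ncard : ℝ) := by
    rw [le_div_iff₀ hn] at hG
    nlinarith
  have h2 : (H.edgeSet.ncard : ℝ) < lam * (Sᶜ.ncard : ℝ) := by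
    have := hH H hHnonempty hHne
    have hv : H.verts = Sᶜ := rfl
    rw [hv, div_lt_iff₀ hnc] at this
    nlinarith
  have hsplit : S.ncard + Sᶜ.ncard = Fintype.card V := by
    simpa using Set.ncard_add_ncard_compl S
  have hcardR : (H.edgeSet.ncard : ℝ) + (B.ncard : ℝ) = (G.edgeSet.ncard : ℝ) := by
    exact_mod_cast hcard
  have hsplitR : (S.ncard : ℝ) + (Sᶜ.ncard : ℝ) = (Fintype.card V : ℝ) := by
    exact_mod_cast hsplit
  show lam * (S.ncard : ℝ) < (B.ncard : ℝ)
  nlinarith
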